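/- arXiv:1907.11159 — 3 statements merged into one kernel-verified Lean document; each statement's English description precedes it below -/
import Mathlib

section
/- Let T : ℕ × ℕ → ℤ be a number triangle with T(r,0) = T(0,0) + r*d2, T(0,k) = T(0,0) + k*d1 for integers d1, d2, with T(r,k) ≠ 0 for all r, k, and suppose there exists an integer D such that T(r,k) * T(r-1,k-1) = T(r,k-1) * T(r-1,k) + D for all r, k ≥ 1. Then there exists an integer d with T(0,0)*d = D + d1*d2 and T(r,k) = T(0,0) + k*d1 + r*d2 + r*k*d for all r, k ≥ 0. -/
theorem stmt_6 (T : ℕ → ℕ → ℤ) (d1 d2 D : ℤ)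
    (h0 : ∀ r : ℕ, T r 0 = T 0 0 + r * d2)
    (h1 : ∀ k : ℕ, T 0 k = T 0 0 + k * d1)
    (hne : ∀ r k : ℕ, T r k ≠ 0)
    (hmul : ∀ r k : ℕ, 1 ≤ r → 1 ≤ k →
      T r k * T (r-1) (k-1) = T r (k-1) * T (r-1) k + D) :
    ∃ d : ℤ, T 0 0 * d = D + d1 * d2 ∧
      ∀ r k : ℕ, T r k = T 0 0 + k * d1 + r * d2 + r * k * d := by
  set a := T 0 0 with ha
  refine ⟨T 1 1 - a - d1 - d2, ?_, ?_⟩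
  · have hm := hmul 1 1 le_rfl le_rfl
    simp only [Nat.sub_self] at hm
    have e1 : T 1 0 = a + 1 * d2 := by simpa using h0 1
    have e2 : T 0 1 = a + 1 * d1 := by simpa using h1 1
    linear_combination hm + T 0 1 * e1 + (a + d2) * e2
  · have hd : a * (T 1 1 - a - d1 - d2) = D + d1 * d2 := by
      have hm := hmul 1 1 le_rfl le_rfl
      simp only [Nat.sub_self] at hm
      have e1 : T 1 0 = a + 1 * d2 := by simpa using h0 1
      have e2 : T 0 1 = a + 1 * d1 := by simpa using h1 1
      linear_combination hm + T 0 1 * e1 + (a + d2) * e2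
    set d := T 1 1 - a - d1 - d2 with hdd
    intro r
    induction r with
    | zero => intro k; simpa using h1 k
    | succ r ih =>
      intro k
      induction k with
      | zero => simpa using h0 (r + 1)
      | succ k ihk =>
        have hm := hmul (r + 1) (k + 1) (by omega) (by omega)
        simp only [Nat.add_sub_cancel] at hm
        have h1' := ih k
        have h2' := ih (k + 1)
        rw [ihk, h1', h2'] at hm
        apply mul_right_cancel₀ (hne r k)
        rw [h1']
        push_cast at hm ⊢
        linear_combination hm - hd
end

section
/- Let T : ℕ × ℕ → ℤ be a number triangle such that for each r, T(r,k) = T(r,0) + k*c_r (each major diagonal is arithmetic) and for each k, T(r,k) = T(0,k) + r*b_k (each minor diagonal is arithmetic), for some integer sequences c_r, b_k. Then T is a Generalized Rascal Triangle: setting c = T(0,0), d1 = c_0, d2 = b_0, and d = c_1 - c_0, one has T(r,k) = c + k*d1 + r*d2 + r*k*d for all r, k. -/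
theorem stmt_8 (T : ℕ → ℕ → ℤ) (cs bs : ℕ → ℤ)
    (hmaj : ∀ r k : ℕ, T r k = T r 0 + k * cs r)
    (hmin : ∀ r k : ℕ, T r k = T 0 k + r * bs k) :
    ∀ r k : ℕ, T r k = T 0 0 + k * cs 0 + r * bs 0 + r * k * (cs 1 - cs 0) := by
  have hc : ∀ r : ℕ, cs r = cs 0 + r * (bs 1 - bs 0) := by
    intro r
    have h1 := hmaj r 1
    have h2 := hmin r 1
    have h3 := hmin r 0
    have h0 := hmaj 0 1
    push_cast at *
    linarith
  intro r k
  have h1 := hmaj r k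
  have h3 := hmin r 0
  have hcr := hc r
  have hc1 := hc 1
  push_cast at hc1
  rw [h1, h3, hcr]
  linear_combination (-(k : ℤ) * r) * hc1
end

section
/- Let c, d be integers and T(r,k) = c + r*k*d (the Generalized Rascal Triangle T(c,d,0,0)). Then for all r ≥ 1 and k ≥ 2, T(r,k) = T(r-1,k-1) + T(0, r+k-2) + T(1, r+k-3) + 2*(d - c). -/
theorem stmt_19 (c d : ℤ) (T : ℕ → ℕ → ℤ)
    (hT : ∀ r k : ℕ, T r k = c + r * k * d) :
    ∀ r k : ℕ, 1 ≤ r → 2 ≤ k →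
      T r k = T (r-1) (k-1) + T 0 (r+k-2) + T 1 (r+k-3) + 2 * (d - c) := by
  intro r k hr hk
  obtain ⟨r, rfl⟩ := Nat.exists_eq_add_of_le hr
  obtain ⟨k, rfl⟩ := Nat.exists_eq_add_of_le hk
  simp only [hT]
  push_cast [show 1 + r - 1 = r by omega, show 2 + k - 1 = 1 + k by omega, show 1 + r + (2 + k) - 2 = 1 + r + k by omega,
    show 1 + r + (2 + k) - 3 = r + k by omega]
  ring
end
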